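/- Let V₀ → V₁ → ... → V_N be a persistence module with composites f^{i,j}, and let d^{i,j} = dim Im f^{i,j} (with d^{i,j} = 0 for out-of-range indices). There exists a unique function N : {(i,j) : 0 ≤ i ≤ j ≤ N} → ℕ such that for all 0 ≤ i ≤ j ≤ N, d^{i,j} equals the sum of N^{a,b} over all pairs (a,b) with a ≤ i and j ≤ b. Moreover N^{i,j} = d^{i,j} - d^{i-1,j} - d^{i,j+1} + d^{i-1,j+1}. -/

import Mathlib

open Module

/-- The composite structure map `f^{i,i+k} : V i → V (i+k)` of a persistence module,
with `f^{i,i} = id`. -/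
noncomputable def pcomp {F : Type*} [Field F] {V : ℕ → Type*} [∀ i, AddCommGroup (V i)]
    [∀ i, Module F (V i)] (f : ∀ i, V i →ₗ[F] V (i + 1)) (i : ℕ) :
    ∀ k, V i →ₗ[F] V (i + k)
  | 0 => LinearMap.id
  | (k + 1) => f (i + k) ∘ₗ pcomp f i k

/-- The rank function `d^{i,j} = dim Im f^{i,j}` of a persistence module `V₀ → ... → V_N`,
extended by `0` for out-of-range indices. -/
noncomputable def prank {F : Type*} [Field F] {V : ℕ → Type*} [∀ i, AddCommGroup (V i)]
    [∀ i, Module F (V i)] (N : ℕ) (f : ∀ i, V i →ₗ[F] V (i + 1)) (i j : ℤ) : ℕ :=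
  if 0 ≤ i ∧ i ≤ j ∧ j ≤ N then
    finrank F (LinearMap.range (pcomp f i.toNat (j - i).toNat))
  else 0

section Aux
variable {F : Type*} [Field F] {V : ℕ → Type*} [∀ i, AddCommGroup (V i)]
    [∀ i, Module F (V i)]

def castE {m n : ℕ} (h : m = n) : V m ≃ₗ[F] V n := by subst h; exact LinearEquiv.refl F (V m)

lemma castE_comm (f : ∀ i, V i →ₗ[F] V (i + 1)) {m n : ℕ} (h : m = n) (x : V m) :
    f n ((castE (F := F) (V := V) h) x) = castE (F := F) (V := V) (congrArg (· + 1) h) (f m x) := by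
  subst h; rfl

lemma pcomp_succ_left (f : ∀ i, V i →ₗ[F] V (i + 1)) (i : ℕ) :
    ∀ k, pcomp f i (k + 1) =
      (castE (F := F) (V := V) (Nat.succ_add i k)).toLinearMap ∘ₗ pcomp f (i + 1) k ∘ₗ f i
  | 0 => by
    ext x; simp [pcomp, castE]
  | (k + 1) => by
    ext x
    have IH := pcomp_succ_left f i k
    show f (i + (k + 1)) (pcomp f i (k + 1) x) = _
    rw [IH]
    erw [castE_comm f (Nat.succ_add i k)]
    rfl
end Aux

section Key
variable {F : Type*} [Field F]

/-- rank-nullity on a submodule -/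
lemma finrank_map_add_inf_ker {W W' : Type*} [AddCommGroup W] [Module F W]
    [AddCommGroup W'] [Module F W'] [FiniteDimensional F W]
    (R : Submodule F W) (φ : W →ₗ[F] W') :
    finrank F (Submodule.map φ R) + finrank F (LinearMap.ker φ ⊓ R : Submodule F W)
      = finrank F R := by
  have h := LinearMap.finrank_range_add_finrank_ker (φ.domRestrict R)
  rw [LinearMap.range_domRestrict, LinearMap.ker_domRestrict] at h
  rw [← h]
  congr 1
  have e1 : Submodule.comap R.subtype (LinearMap.ker φ)
      = Submodule.comap R.subtype (LinearMap.ker φ ⊓ R) := by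
    ext x; simp [x.2]
  rw [e1] at h ⊢
  exact (Submodule.comapSubtypeEquivOfLe (inf_le_right : LinearMap.ker φ ⊓ R ≤ R)).finrank_eq.symm

lemma key_ineq {W W' : Type*} [AddCommGroup W] [Module F W]
    [AddCommGroup W'] [Module F W'] [FiniteDimensional F W] [FiniteDimensional F W']
    (R₁ R₂ : Submodule F W) (h : R₁ ≤ R₂) (φ : W →ₗ[F] W') :
    finrank F R₁ + finrank F (Submodule.map φ R₂)
      ≤ finrank F R₂ + finrank F (Submodule.map φ R₁) := by
  have h1 := finrank_map_add_inf_ker (F := F) R₁ φ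
  have h2 := finrank_map_add_inf_ker (F := F) R₂ φ
  have h3 : finrank F (LinearMap.ker φ ⊓ R₁ : Submodule F W)
      ≤ finrank F (LinearMap.ker φ ⊓ R₂ : Submodule F W) :=
    Submodule.finrank_mono (inf_le_inf_left _ h)
  omega
end Key

section RLemmas
variable {F : Type*} [Field F] {V : ℕ → Type*} [∀ i, AddCommGroup (V i)]
    [∀ i, Module F (V i)] [∀ i, FiniteDimensional F (V i)]

noncomputable def rnk (f : ∀ i, V i →ₗ[F] V (i + 1)) (i k : ℕ) : ℕ :=
  finrank F (LinearMap.range (pcomp f i k))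

lemma rnk_L1 (f : ∀ i, V i →ₗ[F] V (i + 1)) (i k : ℕ) :
    rnk f i (k + 1) ≤ rnk f i k := by
  show finrank F (LinearMap.range (f (i + k) ∘ₗ pcomp f i k)) ≤ _
  rw [LinearMap.range_comp]
  exact Submodule.finrank_map_le _ _

lemma rnk_eq_cast (f : ∀ i, V i →ₗ[F] V (i + 1)) (i k : ℕ) :
    rnk f i (k + 1) = finrank F (LinearMap.range (pcomp f (i + 1) k ∘ₗ f i)) := by
  unfold rnk
  rw [pcomp_succ_left f i k, LinearMap.range_comp,
    LinearEquiv.finrank_map_eq]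

lemma rnk_L2 (f : ∀ i, V i →ₗ[F] V (i + 1)) (i k : ℕ) :
    rnk f i (k + 1) ≤ rnk f (i + 1) k := by
  rw [rnk_eq_cast]
  exact Submodule.finrank_mono (LinearMap.range_comp_le_range _ _)

lemma rnk_L3 (f : ∀ i, V i →ₗ[F] V (i + 1)) (i k : ℕ) :
    rnk f i (k + 1) + rnk f (i + 1) (k + 1) ≤ rnk f (i + 1) k + rnk f i (k + 2) := by
  have e1 := rnk_eq_cast f i k
  have e2 := rnk_eq_cast f i (k + 1)
  have h1 : rnk f (i + 1) (k + 1)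
      = finrank F (Submodule.map (f (i + 1 + k)) (LinearMap.range (pcomp f (i + 1) k))) := by
    show finrank F (LinearMap.range (f (i + 1 + k) ∘ₗ pcomp f (i + 1) k)) = _
    rw [LinearMap.range_comp]
  have h2 : rnk f i (k + 2)
      = finrank F (Submodule.map (f (i + 1 + k))
          (LinearMap.range (pcomp f (i + 1) k ∘ₗ f i))) := by
    rw [e2]
    show finrank F (LinearMap.range ((f (i + 1 + k) ∘ₗ pcomp f (i + 1) k) ∘ₗ f i)) = _
    rw [LinearMap.comp_assoc, LinearMap.range_comp]
  rw [e1, h1, h2]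
  exact key_ineq _ _ (LinearMap.range_comp_le_range _ _) _
end RLemmas

section Telescope

lemma Icc_insert_top {m n : ℤ} (h : m ≤ n + 1) :
    Finset.Icc m (n + 1) = insert (n + 1) (Finset.Icc m n) := by
  ext x
  simp only [Finset.mem_Icc, Finset.mem_insert]
  omega

lemma Icc_insert_bot {m n : ℤ} (h : m ≤ n) :
    Finset.Icc m n = insert m (Finset.Icc (m + 1) n) := by
  ext x
  simp only [Finset.mem_Icc, Finset.mem_insert]
  omega

lemma sum_telescope_up (g : ℤ → ℤ) {m n : ℤ} (h : m ≤ n) :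
    ∑ b ∈ Finset.Icc m n, (g b - g (b + 1)) = g m - g (n + 1) := by
  refine Int.le_induction
    (motive := fun n _ => ∑ b ∈ Finset.Icc m n, (g b - g (b + 1)) = g m - g (n + 1)) ?_ ?_ n h
  · simp only [Finset.Icc_self, Finset.sum_singleton]
  · intro n hmn ih
    rw [Icc_insert_top (by omega), Finset.sum_insert (by simp), ih]
    ring

lemma sum_telescope_down (g : ℤ → ℤ) {m n : ℤ} (h : m ≤ n) :
    ∑ a ∈ Finset.Icc m n, (g a - g (a - 1)) = g n - g (m - 1) := by
  refine Int.le_induction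
    (motive := fun n _ => ∑ a ∈ Finset.Icc m n, (g a - g (a - 1)) = g n - g (m - 1)) ?_ ?_ n h
  · simp only [Finset.Icc_self, Finset.sum_singleton]
  · intro n hmn ih
    rw [Icc_insert_top (by omega), Finset.sum_insert (by simp), ih]
    ring

end Telescope

/-- **Barcode decomposition (interval multiplicity form).** For a persistence module
`V₀ → ... → V_N` with rank function `d^{i,j} = dim Im f^{i,j}`, there is a function `N^{i,j}`
(the interval multiplicities), unique on the range `0 ≤ i ≤ j ≤ N`, such that
`d^{i,j} = Σ_{a ≤ i, j ≤ b} N^{a,b}`; moreover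
`N^{i,j} = d^{i,j} - d^{i-1,j} - d^{i,j+1} + d^{i-1,j+1}`. -/
theorem persistence_barcode_exists_unique {F : Type*} [Field F] {V : ℕ → Type*}
    [∀ i, AddCommGroup (V i)] [∀ i, Module F (V i)] [∀ i, FiniteDimensional F (V i)]
    (N : ℕ) (f : ∀ i, V i →ₗ[F] V (i + 1)) :
    ∃ Nf : ℤ → ℤ → ℕ,
      (∀ i j : ℤ, 0 ≤ i → i ≤ j → j ≤ N →
        prank N f i j = ∑ a ∈ Finset.Icc 0 i, ∑ b ∈ Finset.Icc j (N : ℤ), Nf a b) ∧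
      (∀ i j : ℤ, 0 ≤ i → i ≤ j → j ≤ N →
        (Nf i j : ℤ) = (prank N f i j : ℤ) - (prank N f (i - 1) j : ℤ)
          - (prank N f i (j + 1) : ℤ) + (prank N f (i - 1) (j + 1) : ℤ)) ∧
      (∀ Nf' : ℤ → ℤ → ℕ,
        (∀ i j : ℤ, 0 ≤ i → i ≤ j → j ≤ N →
          prank N f i j = ∑ a ∈ Finset.Icc 0 i, ∑ b ∈ Finset.Icc j (N : ℤ), Nf' a b) →
        ∀ i j : ℤ, 0 ≤ i → i ≤ j → j ≤ N → Nf' i j = Nf i j) := by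
  classical
  have prank_eq : ∀ i j : ℤ, 0 ≤ i → i ≤ j → j ≤ N →
      prank N f i j = rnk f i.toNat (j - i).toNat := by
    intro i j h0 h1 h2
    unfold prank rnk
    rw [if_pos ⟨h0, h1, h2⟩]
  have prank_zero : ∀ i j : ℤ, ¬(0 ≤ i ∧ i ≤ j ∧ j ≤ N) → prank N f i j = 0 := by
    intro i j h; unfold prank; rw [if_neg h]
  have prank_ineq : ∀ i j : ℤ, 0 ≤ i → i ≤ j → j ≤ N →
      prank N f (i - 1) j + prank N f i (j + 1)
        ≤ prank N f i j + prank N f (i - 1) (j + 1) := by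
    intro i j h0 h1 h2
    by_cases hi : 1 ≤ i
    · have a1 : i.toNat = (i - 1).toNat + 1 := by omega
      have a2 : (j - (i - 1)).toNat = (j - i).toNat + 1 := by omega
      by_cases hj : j + 1 ≤ N
      · have a3 : (j + 1 - i).toNat = (j - i).toNat + 1 := by omega
        have a4 : (j + 1 - (i - 1)).toNat = (j - i).toNat + 2 := by omega
        rw [prank_eq (i-1) j (by omega) (by omega) (by omega),
          prank_eq i (j+1) (by omega) (by omega) (by omega),
          prank_eq i j h0 h1 h2,
          prank_eq (i-1) (j+1) (by omega) (by omega) (by omega),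
          a1, a2, a3, a4]
        exact rnk_L3 f _ _
      · rw [prank_zero i (j+1) (by omega), prank_zero (i-1) (j+1) (by omega),
          prank_eq (i-1) j (by omega) (by omega) (by omega),
          prank_eq i j h0 h1 h2, a1, a2]
        have := rnk_L2 f (i - 1).toNat (j - i).toNat
        omega
    · have hi0 : i = 0 := by omega
      subst hi0
      rw [prank_zero (0-1) j (by omega), prank_zero (0-1) (j+1) (by omega)]
      by_cases hj : j + 1 ≤ N
      · have a3 : (j + 1 - 0).toNat = (j - 0).toNat + 1 := by omega
        rw [prank_eq 0 (j+1) le_rfl (by omega) (by omega),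
          prank_eq 0 j le_rfl h1 h2, a3]
        have := rnk_L1 f (0:ℤ).toNat (j - 0).toNat
        omega
      · rw [prank_zero 0 (j+1) (by omega)]
        omega
  set Nf : ℤ → ℤ → ℕ := fun i j =>
    prank N f i j + prank N f (i-1) (j+1) - (prank N f (i-1) j + prank N f i (j+1)) with hNf
  have claim2 : ∀ i j : ℤ, 0 ≤ i → i ≤ j → j ≤ N →
      (Nf i j : ℤ) = (prank N f i j : ℤ) - (prank N f (i - 1) j : ℤ)
        - (prank N f i (j + 1) : ℤ) + (prank N f (i - 1) (j + 1) : ℤ) := by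
    intro i j h0 h1 h2
    have h := prank_ineq i j h0 h1 h2
    simp only [hNf]
    rw [Nat.cast_sub (by omega)]
    push_cast
    ring
  have exist : ∀ i j : ℤ, 0 ≤ i → i ≤ j → j ≤ N →
      prank N f i j = ∑ a ∈ Finset.Icc 0 i, ∑ b ∈ Finset.Icc j (N : ℤ), Nf a b := by
    intro i j h0 h1 h2
    have hz : (∑ a ∈ Finset.Icc 0 i, ∑ b ∈ Finset.Icc j (N:ℤ), (Nf a b : ℤ))
        = (prank N f i j : ℤ) := by
      have inner : ∀ a ∈ Finset.Icc (0:ℤ) i,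
          (∑ b ∈ Finset.Icc j (N:ℤ), (Nf a b : ℤ))
            = (fun a => (prank N f a j : ℤ)) a - (fun a => (prank N f a j : ℤ)) (a - 1) := by
        intro a ha
        rw [Finset.mem_Icc] at ha
        have step : ∀ b ∈ Finset.Icc j (N:ℤ), (Nf a b : ℤ) =
            (fun b => (prank N f a b : ℤ) - (prank N f (a-1) b : ℤ)) b
            - (fun b => (prank N f a b : ℤ) - (prank N f (a-1) b : ℤ)) (b + 1) := by
          intro b hb
          rw [Finset.mem_Icc] at hb
          have hc := claim2 a b ha.1 (by omega) hb.2
          try beta_reduce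
          rw [hc]; ring
        rw [Finset.sum_congr rfl step, sum_telescope_up _ h2]
        have z1 : prank N f a ((N:ℤ)+1) = 0 := prank_zero _ _ (by omega)
        have z2 : prank N f (a-1) ((N:ℤ)+1) = 0 := prank_zero _ _ (by omega)
        try beta_reduce
        rw [z1, z2]
        push_cast
        ring
      rw [Finset.sum_congr rfl inner, sum_telescope_down _ h0]
      have z3 : prank N f ((0:ℤ)-1) j = 0 := prank_zero _ _ (by omega)
      try beta_reduce
      rw [z3]
      push_cast
      ring
    exact_mod_cast hz.symm
  refine ⟨Nf, exist, claim2, ?_⟩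
  intro Nf' hsum i j h0 h1 h2
  have Sval : ∀ a b : ℤ, -1 ≤ a → a ≤ b → b ≤ (N:ℤ) + 1 →
      (∑ x ∈ Finset.Icc 0 a, ∑ y ∈ Finset.Icc b (N:ℤ), (Nf' x y : ℤ))
        = (prank N f a b : ℤ) := by
    intro a b ha hab hbN
    by_cases ha0 : 0 ≤ a
    · by_cases hbn : b ≤ (N:ℤ)
      · have := hsum a b ha0 hab hbn
        exact_mod_cast this.symm
      · have hb : b = (N:ℤ) + 1 := by omega
        subst hb
        have he : Finset.Icc ((N:ℤ)+1) (N:ℤ) = ∅ := Finset.Icc_eq_empty (by omega)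
        rw [he]
        simp [prank_zero a ((N:ℤ)+1) (by omega)]
    · have ha1 : a = -1 := by omega
      subst ha1
      have he : Finset.Icc (0:ℤ) (-1) = ∅ := Finset.Icc_eq_empty (by omega)
      rw [he]
      simp [prank_zero (-1) b (by omega)]
  have hT : ∀ (a jj : ℤ), jj ≤ (N:ℤ) →
      (∑ y ∈ Finset.Icc jj (N:ℤ), (Nf' a y : ℤ))
        = (Nf' a jj : ℤ) + ∑ y ∈ Finset.Icc (jj+1) (N:ℤ), (Nf' a y : ℤ) := by
    intro a jj hjj
    rw [Icc_insert_bot hjj, Finset.sum_insert (by simp only [Finset.mem_Icc]; omega)]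
  have hS : ∀ (ii jj : ℤ), 0 ≤ ii →
      (∑ x ∈ Finset.Icc 0 ii, ∑ y ∈ Finset.Icc jj (N:ℤ), (Nf' x y : ℤ))
        = (∑ y ∈ Finset.Icc jj (N:ℤ), (Nf' ii y : ℤ))
          + ∑ x ∈ Finset.Icc 0 (ii-1), ∑ y ∈ Finset.Icc jj (N:ℤ), (Nf' x y : ℤ) := by
    intro ii jj hii
    have hins : Finset.Icc (0:ℤ) ii = insert ii (Finset.Icc 0 (ii-1)) := by
      ext x; simp only [Finset.mem_Icc, Finset.mem_insert]; omega
    rw [hins, Finset.sum_insert (by simp only [Finset.mem_Icc]; omega)]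
  have key : (Nf' i j : ℤ) = (prank N f i j : ℤ) - (prank N f (i-1) j : ℤ)
      - (prank N f i (j+1) : ℤ) + (prank N f (i-1) (j+1) : ℤ) := by
    have s1 := Sval i j (by omega) h1 (by omega)
    have s2 := Sval (i-1) j (by omega) (by omega) (by omega)
    have s3 := Sval i (j+1) (by omega) (by omega) (by omega)
    have s4 := Sval (i-1) (j+1) (by omega) (by omega) (by omega)
    have t1 := hS i j h0
    have t2 := hS i (j+1) h0
    have u1 := hT i j h2
    linarith [s1, s2, s3, s4, t1, t2, u1]
  have hfin : (Nf' i j : ℤ) = (Nf i j : ℤ) := by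
    rw [key, ← claim2 i j h0 h1 h2]
  exact_mod_cast hfin
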